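/- Let r ≥ 1, let V₀ ⊆ ℝ^r be a rational linear subspace, and let v₀ ∈ ℚ^r. Set t = E(v₀) and L = L(V₀). Then: (i) t is a torsion element of the group (ℂ^×)^r; and (ii) for every Laurent polynomial f in r variables, f vanishes at every point of E(v₀ + V₀) if and only if f vanishes at every point of the coset {z ∈ (ℂ^×)^r : ∏_j z_j^{a_j} = ∏_j t_j^{a_j} for every a ∈ L}. (Thus the Zariski closure in (ℂ^×)^r of the exponential image of a rational affine subspace is a subtorus translated by a point of finite order; this is the mechanism by which the paper's Theorem 2.1 yields Corollaries 2.2 and 2.3, i.e. that components of characteristic varieties are subgroups translated by torsion points.) -/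

import Mathlib

open scoped BigOperators

/-- The exponential map `E : ℝ^r → (ℂ^×)^r`, `E(x)_j = e^{2πi x_j}`. -/
noncomputable def expTorusMap (r : ℕ) (x : Fin r → ℝ) : Fin r → ℂˣ :=
  fun j => Units.mk0 (Complex.exp (2 * (Real.pi : ℂ) * Complex.I * (x j : ℂ)))
    (Complex.exp_ne_zero _)

/-- `e2 x = e^{2πi x}`. -/
noncomputable def e2 (x : ℝ) : ℂ :=
  Complex.exp (2 * (Real.pi : ℂ) * Complex.I * (x : ℂ))

lemma e2_ne_zero (x : ℝ) : e2 x ≠ 0 := Complex.exp_ne_zero _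

lemma e2_add (x y : ℝ) : e2 (x + y) = e2 x * e2 y := by
  rw [e2, e2, e2, ← Complex.exp_add]
  push_cast
  ring_nf

lemma e2_zero : e2 0 = 1 := by simp [e2]

lemma e2_sub (x y : ℝ) : e2 (x - y) = e2 x / e2 y := by
  rw [eq_div_iff (e2_ne_zero y), ← e2_add, sub_add_cancel]

lemma e2_half : e2 (1 / 2) = -1 := by
  rw [e2, show (2 * (Real.pi : ℂ) * Complex.I * ((1 / 2 : ℝ) : ℂ)) = Real.pi * Complex.I by
    push_cast; ring]
  exact Complex.exp_pi_mul_I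

lemma e2_int (k : ℤ) : e2 k = 1 := by
  rw [e2, show (2 * (Real.pi : ℂ) * Complex.I * ((k : ℝ) : ℂ)) = k * (2 * Real.pi * Complex.I) by
    push_cast; ring]
  exact Complex.exp_int_mul_two_pi_mul_I k

lemma e2_pow (x : ℝ) (m : ℕ) : e2 x ^ m = e2 (m * x) := by
  rw [e2, e2, ← Complex.exp_nat_mul]
  push_cast
  ring_nf

lemma prod_expTorusMap_zpow (r : ℕ) (a : Fin r → ℤ) (x : Fin r → ℝ) :
    Units.val (∏ j, (expTorusMap r x j) ^ (a j)) = e2 (∑ j, (a j : ℝ) * x j) := by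
  have h1 : Units.val (∏ j, (expTorusMap r x j) ^ (a j))
      = ∏ j, (Units.val (expTorusMap r x j)) ^ (a j) := by
    rw [← Units.coeHom_apply, map_prod]
    simp [Units.val_zpow_eq_zpow_val]
  rw [h1]
  have h2 : ∀ j : Fin r, (Units.val (expTorusMap r x j)) ^ (a j)
      = Complex.exp ((a j : ℂ) * (2 * (Real.pi : ℂ) * Complex.I * (x j : ℂ))) := by
    intro j
    rw [Complex.exp_int_mul]
    rfl
  simp only [h2]
  rw [← Complex.exp_sum, e2]
  congr 1
  push_cast
  rw [Finset.mul_sum]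
  exact Finset.sum_congr rfl fun j _ => by ring

/-- If the characters `v ↦ e^{2πi⟨a,v⟩}` and `v ↦ e^{2πi⟨b,v⟩}` agree on a linear subspace,
then the linear forms `⟨a,·⟩` and `⟨b,·⟩` agree there. -/
lemma ip_eq_of_e2_eq (r : ℕ) (V : Submodule ℝ (Fin r → ℝ)) (a b : Fin r → ℤ)
    (h : ∀ v ∈ V, e2 (∑ j, (a j : ℝ) * v j) = e2 (∑ j, (b j : ℝ) * v j))
    {v : Fin r → ℝ} (hv : v ∈ V) : (∑ j, (a j : ℝ) * v j) = ∑ j, (b j : ℝ) * v j := by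
  by_contra hc
  set c : ℝ := (∑ j, (a j : ℝ) * v j) - ∑ j, (b j : ℝ) * v j with hcdef
  have hc0 : c ≠ 0 := sub_ne_zero.mpr hc
  have hv' : (1 / (2 * c)) • v ∈ V := V.smul_mem _ hv
  have hs : ∀ d : Fin r → ℤ, (∑ j, (d j : ℝ) * ((1 / (2 * c)) • v) j)
      = (1 / (2 * c)) * ∑ j, (d j : ℝ) * v j := by
    intro d
    rw [Finset.mul_sum]
    refine Finset.sum_congr rfl fun j _ => ?_
    simp only [Pi.smul_apply, smul_eq_mul]
    ring
  have h2 := h _ hv'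
  rw [hs a, hs b] at h2
  have h3 : e2 ((1 / (2 * c)) * (∑ j, (a j : ℝ) * v j)
      - (1 / (2 * c)) * (∑ j, (b j : ℝ) * v j)) = 1 := by
    rw [e2_sub, h2, div_self (e2_ne_zero _)]
  have h4 : (1 / (2 * c)) * (∑ j, (a j : ℝ) * v j)
      - (1 / (2 * c)) * (∑ j, (b j : ℝ) * v j) = 1 / 2 := by
    rw [← mul_sub, ← hcdef]
    field_simp
  rw [h4, e2_half] at h3
  norm_num at h3

/-- The character of the additive group of a subspace `V` attached to an integer vector `a`. -/
noncomputable def psiChar (r : ℕ) (V : Submodule ℝ (Fin r → ℝ)) (a : Fin r → ℤ) :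
    Multiplicative ↥V →* ℂ where
  toFun v := e2 (∑ j, (a j : ℝ) * ((Multiplicative.toAdd v : ↥V) : Fin r → ℝ) j)
  map_one' := by
    simp only [toAdd_one, ZeroMemClass.coe_zero, Pi.zero_apply, mul_zero,
      Finset.sum_const_zero]
    exact e2_zero
  map_mul' u v := by
    rw [← e2_add]
    congr 1
    simp only [toAdd_mul, AddMemClass.coe_add, Pi.add_apply, mul_add,
      Finset.sum_add_distrib]

lemma psiChar_apply (r : ℕ) (V : Submodule ℝ (Fin r → ℝ)) (a : Fin r → ℤ)
    (v : Multiplicative ↥V) :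
    psiChar r V a v = e2 (∑ j, (a j : ℝ) * ((Multiplicative.toAdd v : ↥V) : Fin r → ℝ) j) :=
  rfl

/-- for a rational linear subspace `V₀ ⊆ ℝ^r` and a rational point `v₀ ∈ ℚ^r`,
with `t = E(v₀)` and `L = L(V₀)` the integral annihilator of `V₀`:
(i) `t` is a torsion element of `(ℂ^×)^r`; (ii) a Laurent polynomial vanishes on
`E(v₀ + V₀)` iff it vanishes on the coset `{z : ∏ z_j^{a_j} = ∏ t_j^{a_j} for all a ∈ L}`. -/
theorem zariski_closure_of_exp_of_rational_affine_subspace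
    (r : ℕ) (hr : 1 ≤ r) (V₀ : Submodule ℝ (Fin r → ℝ))
    (hV₀ : ∃ s : Set (Fin r → ℝ), (∀ v ∈ s, ∀ j, ∃ q : ℚ, v j = (q : ℝ)) ∧
      V₀ = Submodule.span ℝ s)
    (v₀ : Fin r → ℝ) (hv₀ : ∀ j, ∃ q : ℚ, v₀ j = (q : ℝ)) :
    (∃ m : ℕ, 0 < m ∧ ∀ j, (expTorusMap r v₀ j) ^ m = 1) ∧
    (∀ (S : Finset (Fin r → ℤ)) (coef : (Fin r → ℤ) → ℂ),
      ((∀ v ∈ V₀,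
          ∑ a ∈ S, coef a * Units.val (∏ j, (expTorusMap r (v₀ + v) j) ^ (a j)) = 0)
        ↔
       (∀ z : Fin r → ℂˣ,
          (∀ a : Fin r → ℤ, (∀ v ∈ V₀, ∑ j, (a j : ℝ) * v j = 0) →
            (∏ j, (z j) ^ (a j)) = ∏ j, (expTorusMap r v₀ j) ^ (a j)) →
          ∑ a ∈ S, coef a * Units.val (∏ j, (z j) ^ (a j)) = 0))) := by
  classical
  constructor
  · -- (i) torsion
    choose q hq using hv₀
    refine ⟨∏ j, (q j).den, Finset.prod_pos (fun j _ => (q j).pos), fun j => ?_⟩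
    set m : ℕ := ∏ j, (q j).den with hm
    obtain ⟨k, hk⟩ := Finset.dvd_prod_of_mem (fun j => (q j).den) (Finset.mem_univ j)
    have hval : Units.val ((expTorusMap r v₀ j) ^ m) = 1 := by
      rw [Units.val_pow_eq_pow_val]
      show e2 (v₀ j) ^ m = 1
      rw [e2_pow, hq j]
      have heq : (m : ℝ) * (q j : ℝ) = (((q j).num * k : ℤ) : ℝ) := by
        rw [hm, hk, Rat.cast_def]
        push_cast
        have : ((q j).den : ℝ) ≠ 0 := by positivity
        field_simp
      rw [heq, e2_int]
    exact Units.ext (by simpa using hval)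
  · -- (ii)
    intro S coef
    set Ψ : (Fin r → ℤ) → (Multiplicative ↥V₀ →* ℂ) := psiChar r V₀ with hΨ
    set c' : (Fin r → ℤ) → ℂ := fun a => coef a * e2 (∑ j, (a j : ℝ) * v₀ j) with hc'
    have key : (∀ v ∈ V₀,
          ∑ a ∈ S, coef a * Units.val (∏ j, (expTorusMap r (v₀ + v) j) ^ (a j)) = 0) →
        ∀ χ ∈ S.image Ψ, (∑ a ∈ S.filter (fun a => Ψ a = χ), c' a) = 0 := by
      intro h
      have li := linearIndependent_iff'.mp (linearIndependent_monoidHom (Multiplicative ↥V₀) ℂ)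
      refine li (S.image Ψ) (fun χ => ∑ a ∈ S.filter (fun a => Ψ a = χ), c' a) ?_
      funext v
      simp only [Finset.sum_apply, Pi.smul_apply, smul_eq_mul, Pi.zero_apply]
      have regroup : ∑ χ ∈ S.image Ψ,
          (∑ a ∈ S.filter (fun a => Ψ a = χ), c' a) * (χ : Multiplicative ↥V₀ → ℂ) v
          = ∑ a ∈ S, c' a * (Ψ a : Multiplicative ↥V₀ → ℂ) v := by
        rw [← Finset.sum_fiberwise_of_maps_to (fun a ha => Finset.mem_image_of_mem Ψ ha)
          (fun a => c' a * (Ψ a : Multiplicative ↥V₀ → ℂ) v)]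
        refine Finset.sum_congr rfl fun χ hχ => ?_
        rw [Finset.sum_mul]
        refine Finset.sum_congr rfl fun a ha => ?_
        rw [(Finset.mem_filter.mp ha).2]
      rw [regroup]
      set w : ↥V₀ := Multiplicative.toAdd v with hw
      have h2 := h (w : Fin r → ℝ) w.2
      rw [← h2]
      refine Finset.sum_congr rfl fun a _ => ?_
      rw [prod_expTorusMap_zpow, psiChar_apply, hc']
      rw [show (∑ j, (a j : ℝ) * (v₀ + (w : Fin r → ℝ)) j)
          = (∑ j, (a j : ℝ) * v₀ j) + ∑ j, (a j : ℝ) * (w : Fin r → ℝ) j by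
        simp only [Pi.add_apply, mul_add, Finset.sum_add_distrib]]
      rw [e2_add]
      ring
    constructor
    · intro h z hz
      have hd := key h
      rw [← Finset.sum_fiberwise_of_maps_to (fun a ha => Finset.mem_image_of_mem Ψ ha)
          (fun a => coef a * Units.val (∏ j, (z j) ^ (a j)))]
      refine Finset.sum_eq_zero fun χ hχ => ?_
      obtain ⟨a₀, ha₀S, ha₀⟩ := Finset.mem_image.mp hχ
      set g : (Fin r → ℤ) → ℂ :=
        fun a => Units.val (∏ j, (z j) ^ (a j)) / e2 (∑ j, (a j : ℝ) * v₀ j) with hg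
      have hterm : ∀ a, coef a * Units.val (∏ j, (z j) ^ (a j)) = c' a * g a := by
        intro a
        rw [hg, hc']
        field_simp [e2_ne_zero]
      have hgconst : ∀ a ∈ S.filter (fun a => Ψ a = χ), g a = g a₀ := by
        intro a ha
        have hψ : Ψ a = Ψ a₀ := by rw [(Finset.mem_filter.mp ha).2, ha₀]
        have hips : ∀ u ∈ V₀, (∑ j, (a j : ℝ) * u j) = ∑ j, (a₀ j : ℝ) * u j := by
          intro u hu
          refine ip_eq_of_e2_eq r V₀ a a₀ (fun u' hu' => ?_) hu
          have := DFunLike.congr_fun hψ (Multiplicative.ofAdd (⟨u', hu'⟩ : ↥V₀))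
          simpa [hΨ, psiChar_apply] using this
        have hcond : ∀ u ∈ V₀, ∑ j, (((a - a₀) j : ℤ) : ℝ) * u j = 0 := by
          intro u hu
          have h3 := hips u hu
          simp only [Pi.sub_apply, Int.cast_sub, sub_mul, Finset.sum_sub_distrib]
          rw [h3, sub_self]
        have hz' := hz (a - a₀) hcond
        have hsplit : (∏ j, (z j) ^ (a j))
            = (∏ j, (z j) ^ (a₀ j)) * ∏ j, (z j) ^ ((a - a₀) j) := by
          rw [← Finset.prod_mul_distrib]
          refine Finset.prod_congr rfl fun j _ => ?_
          rw [← zpow_add]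
          congr 1
          simp only [Pi.sub_apply]
          ring
        have hip_sub : (∑ j, (((a - a₀) j : ℤ) : ℝ) * v₀ j)
            = (∑ j, (a j : ℝ) * v₀ j) - ∑ j, (a₀ j : ℝ) * v₀ j := by
          simp only [Pi.sub_apply, Int.cast_sub, sub_mul, Finset.sum_sub_distrib]
        rw [hg]
        beta_reduce
        rw [hsplit, hz', Units.val_mul, prod_expTorusMap_zpow, hip_sub, e2_sub]
        field_simp [e2_ne_zero]
      calc ∑ a ∈ S.filter (fun a => Ψ a = χ), coef a * Units.val (∏ j, (z j) ^ (a j))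
          = ∑ a ∈ S.filter (fun a => Ψ a = χ), c' a * g a₀ :=
            Finset.sum_congr rfl fun a ha => by rw [hterm a, hgconst a ha]
        _ = (∑ a ∈ S.filter (fun a => Ψ a = χ), c' a) * g a₀ := (Finset.sum_mul _ _ _).symm
        _ = 0 := by rw [hd χ hχ, zero_mul]
    · intro h v hv
      refine h (expTorusMap r (v₀ + v)) fun a ha => ?_
      refine Units.ext ?_
      rw [prod_expTorusMap_zpow, prod_expTorusMap_zpow]
      congr 1
      rw [show (∑ j, (a j : ℝ) * (v₀ + v) j)
          = (∑ j, (a j : ℝ) * v₀ j) + ∑ j, (a j : ℝ) * v j by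
        simp only [Pi.add_apply, mul_add, Finset.sum_add_distrib]]
      rw [ha v hv, add_zero]
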